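/- Let a ≥ 3 be an integer and let β be the unique real root greater than 1 of the polynomial P(X) = X^3 − aX^2 − (a−1)X + 1. Then L_⊗(β) = 2. -/

import Mathlib

open Polynomial

/-- The β-transformation `T_β(x) = βx - ⌊βx⌋`. -/
noncomputable def betaT (β : ℝ) : ℝ → ℝ := fun x => β * x - ⌊β * x⌋

/-- `fin(β)`: reals `x` such that `|x|/β^N ∈ [0,1)` and the greedy expansion of
`|x|/β^N` is finite, for some `N, n ∈ ℕ`. -/
def finBeta (β : ℝ) : Set ℝ :=
  {x | ∃ N n : ℕ, |x| / β ^ N ∈ Set.Ico (0 : ℝ) 1 ∧ (betaT β)^[n] (|x| / β ^ N) = 0}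

/-- `ℤ_β`: the set of β-integers. -/
def betaInt (β : ℝ) : Set ℝ :=
  {x | ∃ N : ℕ, |x| / β ^ N ∈ Set.Ico (0 : ℝ) 1 ∧ (betaT β)^[N] (|x| / β ^ N) = 0}

/-- `L_⊕(β)`: the least `L ∈ ℕ` such that `β^L·(x+y) ∈ ℤ_β` for all
`x, y ∈ ℤ_β` with `x + y ∈ fin(β)`. -/
noncomputable def Lplus (β : ℝ) : ℕ :=
  sInf {L : ℕ | ∀ x ∈ betaInt β, ∀ y ∈ betaInt β,
    x + y ∈ finBeta β → β ^ L * (x + y) ∈ betaInt β}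

/-- `L_⊗(β)`: the least `L ∈ ℕ` such that `β^L·(x·y) ∈ ℤ_β` for all
`x, y ∈ ℤ_β` with `x·y ∈ fin(β)`. -/
noncomputable def Lmul (β : ℝ) : ℕ :=
  sInf {L : ℕ | ∀ x ∈ betaInt β, ∀ y ∈ betaInt β,
    x * y ∈ finBeta β → β ^ L * (x * y) ∈ betaInt β}


set_option maxHeartbeats 1000000

lemma betaT_eq_fract (β x : ℝ) : betaT β x = Int.fract (β * x) := rfl

lemma betaT_mem_Ico (β x : ℝ) : betaT β x ∈ Set.Ico (0:ℝ) 1 :=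
  ⟨Int.fract_nonneg _, Int.fract_lt_one _⟩

lemma betaT_zero (β : ℝ) : betaT β 0 = 0 := by
  simp [betaT]

lemma betaT_iterate_zero (β : ℝ) (n : ℕ) : (betaT β)^[n] 0 = 0 := by
  induction n with
  | zero => rfl
  | succ n ih => rw [Function.iterate_succ_apply, betaT_zero, ih]

lemma betaT_iterate_mem_Ico (β : ℝ) {u : ℝ} (hu : u ∈ Set.Ico (0:ℝ) 1) (n : ℕ) :
    (betaT β)^[n] u ∈ Set.Ico (0:ℝ) 1 := by
  cases n with
  | zero => exact hu
  | succ n => rw [Function.iterate_succ_apply']; exact betaT_mem_Ico β _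

-- beta bounds
lemma beta_bounds (a : ℤ) (ha : 3 ≤ a) (β : ℝ) (hβ : 1 < β)
    (hroot : β ^ 3 - (a : ℝ) * β ^ 2 - ((a : ℝ) - 1) * β + 1 = 0) :
    (a : ℝ) < β ∧ β < (a : ℝ) + 1 := by
  have ha' : (3 : ℝ) ≤ (a : ℝ) := by exact_mod_cast ha
  constructor
  · by_contra h
    push_neg at h
    nlinarith [sq_nonneg β, mul_pos (lt_trans one_pos hβ) (lt_trans one_pos hβ)]
  · by_contra h
    push_neg at h
    nlinarith [sq_nonneg β, mul_pos (lt_trans one_pos hβ) (lt_trans one_pos hβ)]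

-- gamma existence
lemma gamma_exists (a : ℤ) (ha : 3 ≤ a) :
    ∃ γ : ℝ, 0 < γ ∧ γ < 1 ∧ γ ^ 3 - (a : ℝ) * γ ^ 2 - ((a : ℝ) - 1) * γ + 1 = 0 := by
  have ha' : (3 : ℝ) ≤ (a : ℝ) := by exact_mod_cast ha
  set f : ℝ → ℝ := fun t => t ^ 3 - (a : ℝ) * t ^ 2 - ((a : ℝ) - 1) * t + 1 with hf
  have hcont : ContinuousOn f (Set.Icc (0:ℝ) 1) := by fun_prop
  have h0 : f 0 = 1 := by simp [hf]
  have h1 : f 1 = 3 - 2 * (a:ℝ) := by simp [hf]; ring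
  have hmem : (0:ℝ) ∈ Set.Ioo (f 1) (f 0) := by
    constructor <;> [skip; simp [h0]]
    rw [h1]; linarith
  obtain ⟨γ, hγ, hfγ⟩ := intermediate_value_Ioo' (by norm_num : (0:ℝ) ≤ 1) hcont hmem
  exact ⟨γ, hγ.1, hγ.2, hfγ⟩

-- the key gamma inequality
lemma gamma_ineq (a : ℤ) (ha : 3 ≤ a) (γ : ℝ) (h0 : 0 < γ) (h1 : γ < 1)
    (hroot : γ ^ 3 - (a : ℝ) * γ ^ 2 - ((a : ℝ) - 1) * γ + 1 = 0) :
    (a : ℝ) ^ 2 * γ ^ 3 < (1 - γ) ^ 2 := by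
  have ha' : (3 : ℝ) ≤ (a : ℝ) := by exact_mod_cast ha
  -- (a-1)γ + γ²(a-γ) = 1
  have key : ((a:ℝ) - 1) * γ + γ ^ 2 * ((a:ℝ) - γ) = 1 := by linarith
  have hγa : γ < (a:ℝ) := by linarith
  have h2 : ((a:ℝ) - 1) * γ < 1 := by nlinarith [sq_nonneg γ]
  -- γ ≤ 1/(a-1), so a - γ ≥ a - 1/(a-1)
  have h3 : ((a:ℝ) - 1) * γ + γ ^ 2 * ((a:ℝ) - 1 / ((a:ℝ) - 1)) ≤ 1 := by
    have : 1 / ((a:ℝ) - 1) ≥ γ := by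
      rw [ge_iff_le, le_div_iff₀ (by linarith)]
      nlinarith
    nlinarith [sq_nonneg γ]
  nlinarith [sq_nonneg γ, sq_nonneg (γ*(a:ℝ)), mul_pos h0 h0, sq_nonneg ((a:ℝ)*γ - 1), mul_pos (mul_pos h0 h0) h0]


lemma div_pow_mem_Ico (β : ℝ) (hβ : 1 < β) {u : ℝ} (hu : u ∈ Set.Ico (0:ℝ) 1) (k : ℕ) :
    u / β ^ k ∈ Set.Ico (0:ℝ) 1 := by
  have hβ0 : (0:ℝ) < β := lt_trans one_pos hβ
  have h1 : (1:ℝ) ≤ β ^ k := one_le_pow₀ (le_of_lt hβ)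
  exact ⟨div_nonneg hu.1 (le_of_lt (pow_pos hβ0 k)),
    lt_of_le_of_lt (div_le_self hu.1 h1) hu.2⟩

-- shift: T^[m+k] (u/β^k) = T^[m] u for u ∈ [0,1)
lemma betaT_shift (β : ℝ) (hβ : 1 < β) {u : ℝ} (hu : u ∈ Set.Ico (0:ℝ) 1) (m k : ℕ) :
    (betaT β)^[m + k] (u / β ^ k) = (betaT β)^[m] u := by
  induction k with
  | zero => simp
  | succ k ih =>
    have hβ0 : (0:ℝ) < β := lt_trans one_pos hβ
    have hq : u / β ^ k ∈ Set.Ico (0:ℝ) 1 := div_pow_mem_Ico β hβ hu k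
    have e1 : u / β ^ (k+1) = (u / β ^ k) / β := by rw [pow_succ]; ring
    have e2 : betaT β ((u / β ^ k) / β) = u / β ^ k := by
      have h0 : ⌊β * ((u / β ^ k) / β)⌋ = 0 := by
        rw [mul_div_cancel₀ _ (ne_of_gt hβ0)]
        exact Int.floor_eq_zero_iff.mpr hq
      show β * ((u / β ^ k) / β) - (⌊β * ((u / β ^ k) / β)⌋ : ℝ) = u / β ^ k
      rw [h0, mul_div_cancel₀ _ (ne_of_gt hβ0)]
      simp
    rw [e1, show m + (k+1) = (m + k) + 1 by ring, Function.iterate_succ_apply, e2, ih]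

-- value of T^[N](|w|/β^N) independent of valid N
lemma betaT_stable (β : ℝ) (hβ : 1 < β) (w : ℝ) {N M : ℕ}
    (hN : |w| / β ^ N ∈ Set.Ico (0:ℝ) 1) (hM : |w| / β ^ M ∈ Set.Ico (0:ℝ) 1) :
    (betaT β)^[N] (|w| / β ^ N) = (betaT β)^[M] (|w| / β ^ M) := by
  have hβ0 : (0:ℝ) < β := lt_trans one_pos hβ
  rcases le_total N M with h | h
  · obtain ⟨k, rfl⟩ := Nat.exists_eq_add_of_le h
    have : |w| / β ^ (N + k) = (|w| / β ^ N) / β ^ k := by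
      rw [pow_add]; ring
    rw [this, betaT_shift β hβ hN N k]
  · obtain ⟨k, rfl⟩ := Nat.exists_eq_add_of_le h
    have : |w| / β ^ (M + k) = (|w| / β ^ M) / β ^ k := by
      rw [pow_add]; ring
    rw [this, betaT_shift β hβ hM M k]

lemma not_mem_betaInt (β : ℝ) (hβ : 1 < β) (w : ℝ) (N : ℕ)
    (h1 : |w| / β ^ N ∈ Set.Ico (0:ℝ) 1) (h2 : (betaT β)^[N] (|w| / β ^ N) ≠ 0) :
    w ∉ betaInt β := by
  rintro ⟨M, hM1, hM2⟩
  exact h2 ((betaT_stable β hβ w h1 hM1).trans hM2)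


/-- greedy digit expansion -/
lemma betaT_expansion (β : ℝ) {u : ℝ} {n : ℕ} (h : (betaT β)^[n] u = 0) :
    β ^ n * u = ∑ i ∈ Finset.range n, (⌊β * (betaT β)^[i] u⌋ : ℝ) * β ^ (n - 1 - i) := by
  induction n generalizing u with
  | zero => simp at h ⊢; simp [h]
  | succ n ih =>
    have hv : (betaT β)^[n] (betaT β u) = 0 := by
      rw [← Function.iterate_succ_apply]; exact h
    have ihv := ih hv
    rw [Finset.sum_range_succ']
    have hstep : ∀ i : ℕ, (betaT β)^[i] (betaT β u) = (betaT β)^[i+1] u := by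
      intro i; rw [Function.iterate_succ_apply]
    calc β ^ (n+1) * u = β ^ n * (betaT β u) + (⌊β * u⌋ : ℝ) * β ^ n := by
          simp only [betaT]; ring
      _ = ∑ i ∈ Finset.range n, (⌊β * (betaT β)^[i] (betaT β u)⌋ : ℝ) * β ^ (n - 1 - i)
            + (⌊β * u⌋ : ℝ) * β ^ n := by rw [ihv]
      _ = ∑ i ∈ Finset.range n, (⌊β * (betaT β)^[i+1] u⌋ : ℝ) * β ^ (n + 1 - 1 - (i+1))
            + (⌊β * (betaT β)^[0] u⌋ : ℝ) * β ^ (n + 1 - 1 - 0) := by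
          congr 1
          · apply Finset.sum_congr rfl
            intro i _
            rw [hstep i]
            congr 2
            omega



lemma cubic_monic {R : Type*} [CommRing R] [Nontrivial R] (b c d : R) :
    (X ^ 3 - C b * X ^ 2 - C c * X + C d : R[X]).Monic := by
  have h : (X ^ 3 - C b * X ^ 2 - C c * X + C d : R[X])
      = C 1 * X ^ 3 + C (-b) * X ^ 2 + C (-c) * X + C d := by
    simp only [map_neg, map_one]; ring
  rw [h]
  unfold Polynomial.Monic
  rw [leadingCoeff_cubic (one_ne_zero)]

lemma no_rat_root (a : ℤ) (ha : 3 ≤ a) (r : ℚ)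
    (h : r ^ 3 - (a:ℚ) * r ^ 2 - ((a:ℚ) - 1) * r + 1 = 0) : False := by
  have hint : IsIntegral ℤ r := by
    refine ⟨X ^ 3 - C a * X ^ 2 - C (a - 1) * X + C 1, cubic_monic a (a-1) 1, ?_⟩
    simp only [eval₂_add, eval₂_sub, eval₂_mul, eval₂_pow, eval₂_X, eval₂_C, map_intCast, algebraMap_int_eq, Int.coe_castRingHom]
    push_cast
    linear_combination h
  obtain ⟨m, hm⟩ := IsIntegrallyClosed.isIntegral_iff.mp hint
  have hm' : (m : ℚ) = r := by exact_mod_cast hm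
  rw [← hm'] at h
  have hz : m ^ 3 - a * m ^ 2 - (a - 1) * m + 1 = 0 := by exact_mod_cast h
  have hunit : IsUnit m := IsUnit.of_mul_eq_one (-(m * m - a * m - (a - 1)))
    (by linear_combination -hz)
  rcases Int.isUnit_iff.mp hunit with h1 | h1 <;> subst h1 <;> omega

/-- transfer of rational polynomial identities from β to γ -/
lemma root_transfer (a : ℤ) (ha : 3 ≤ a) (β γ : ℝ)
    (hrootβ : β ^ 3 - (a : ℝ) * β ^ 2 - ((a : ℝ) - 1) * β + 1 = 0)
    (hrootγ : γ ^ 3 - (a : ℝ) * γ ^ 2 - ((a : ℝ) - 1) * γ + 1 = 0)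
    (q : ℚ[X]) (hq : (aeval β) q = 0) : (aeval γ) q = 0 := by
  set P : ℚ[X] := X ^ 3 - C (a:ℚ) * X ^ 2 - C ((a:ℚ) - 1) * X + C 1 with hP
  have hPmonic : P.Monic := cubic_monic _ _ _
  have hPβ : (aeval β) P = 0 := by
    simp only [hP, map_add, map_sub, map_mul, map_pow, aeval_X, aeval_C, map_one, map_intCast, map_sub, Rat.cast_intCast, Rat.cast_sub, Rat.cast_one]
    push_cast
    linear_combination hrootβ
  have hPγ : (aeval γ) P = 0 := by
    simp only [hP, map_add, map_sub, map_mul, map_pow, aeval_X, aeval_C, map_one, map_intCast, map_sub, Rat.cast_intCast, Rat.cast_sub, Rat.cast_one]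
    push_cast
    linear_combination hrootγ
  have hint : IsIntegral ℚ β := ⟨P, hPmonic, hPβ⟩
  have hmdvdP := minpoly.dvd ℚ β hPβ
  have hmdvdq := minpoly.dvd ℚ β hq
  set m : ℚ[X] := minpoly ℚ β with hmdef
  have hmmonic : m.Monic := minpoly.monic hint
  obtain ⟨c, hc⟩ := hmdvdP
  have hcmonic : c.Monic := hmmonic.of_mul_monic_left (hc ▸ hPmonic)
  have hPdeg : P.natDegree = 3 := by
    have h : P = C 1 * X ^ 3 + C (-(a:ℚ)) * X ^ 2 + C (-((a:ℚ)-1)) * X + C 1 := by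
      simp only [hP, map_neg, map_one]; ring
    rw [h, natDegree_cubic (one_ne_zero)]
  have hdegsum : m.natDegree + c.natDegree = 3 := by
    rw [← hPdeg, hc, hmmonic.natDegree_mul hcmonic]
  have hm1 : 1 ≤ m.natDegree := minpoly.natDegree_pos hint
  -- find rational root if m ≠ P
  have hmP : m = P := by
    rcases Nat.lt_or_ge m.natDegree 3 with hlt | hge
    · exfalso
      rcases Nat.eq_or_lt_of_le hm1 with h1 | h2
      · -- m linear, β rational
        have : m = X + C (m.coeff 0) := by
          have := eq_X_add_C_of_natDegree_le_one (le_of_eq h1.symm)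
          rwa [show m.coeff 1 = 1 from ?_, map_one, one_mul] at this
          have := hmmonic
          unfold Polynomial.Monic Polynomial.leadingCoeff at this
          rwa [← h1] at this
        have hβr : β = ((- m.coeff 0 : ℚ) : ℝ) := by
          have h0 := minpoly.aeval ℚ β
          rw [← hmdef, this] at h0
          simp at h0
          push_cast
          linarith
        apply no_rat_root a ha (- m.coeff 0)
        have := hrootβ
        rw [hβr] at this
        exact_mod_cast this
      · -- m degree 2, c linear with a rational root
        have hcdeg : c.natDegree = 1 := by omega
        have hcform : c = X + C (c.coeff 0) := by
          have := eq_X_add_C_of_natDegree_le_one (le_of_eq hcdeg)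
          rwa [show c.coeff 1 = 1 from ?_, map_one, one_mul] at this
          have := hcmonic
          unfold Polynomial.Monic Polynomial.leadingCoeff at this
          rwa [hcdeg] at this
        set r : ℚ := - c.coeff 0 with hr
        have hProot : P.eval r = 0 := by
          rw [hc, eval_mul, hcform]
          simp [hr]
        apply no_rat_root a ha r
        have : P.eval r = r ^ 3 - (a:ℚ) * r ^ 2 - ((a:ℚ) - 1) * r + 1 := by
          simp [hP]
        rw [this] at hProot
        exact hProot
    · -- degrees equal, c constant = 1
      have hc0 : c.natDegree = 0 := by omega
      have : c = 1 := hcmonic.natDegree_eq_zero.mp hc0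
      rw [hc, this, mul_one]
  obtain ⟨h, hh⟩ := hmdvdq
  rw [hh, map_mul, hmP, hPγ, zero_mul]


-- evaluation of a digit polynomial
lemma aeval_digit_poly (t : ℝ) (d : ℕ → ℤ) (n : ℕ) :
    (aeval t) (∑ i ∈ Finset.range n, C ((d i : ℚ)) * X ^ (n - 1 - i))
      = ∑ i ∈ Finset.range n, (d i : ℝ) * t ^ (n - 1 - i) := by
  rw [map_sum]
  apply Finset.sum_congr rfl
  intro i _
  rw [map_mul, map_pow, aeval_X, aeval_C]
  norm_num

-- bound for digit polynomial value at γ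
lemma digit_poly_bound (a : ℤ) (ha : 3 ≤ a) (γ : ℝ) (h0 : 0 < γ) (h1 : γ < 1) (d : ℕ → ℤ) (n : ℕ)
    (hd : ∀ i < n, 0 ≤ d i ∧ d i ≤ a) :
    0 ≤ ∑ i ∈ Finset.range n, (d i : ℝ) * γ ^ (n - 1 - i) ∧
    (1 - γ) * (∑ i ∈ Finset.range n, (d i : ℝ) * γ ^ (n - 1 - i)) ≤ (a : ℝ) := by
  have hterm : ∀ i ∈ Finset.range n, (0:ℝ) ≤ (d i : ℝ) * γ ^ (n - 1 - i) := by
    intro i hi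
    have := (hd i (Finset.mem_range.mp hi)).1
    positivity
  constructor
  · exact Finset.sum_nonneg hterm
  · have hle : (∑ i ∈ Finset.range n, (d i : ℝ) * γ ^ (n - 1 - i))
        ≤ ∑ i ∈ Finset.range n, (a:ℝ) * γ ^ (n - 1 - i) := by
      apply Finset.sum_le_sum
      intro i hi
      have := (hd i (Finset.mem_range.mp hi)).2
      have hγp : (0:ℝ) ≤ γ ^ (n - 1 - i) := le_of_lt (pow_pos h0 _)
      apply mul_le_mul_of_nonneg_right _ hγp
      exact_mod_cast this
    have hre : ∑ i ∈ Finset.range n, (a:ℝ) * γ ^ (n - 1 - i)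
        = (a:ℝ) * ∑ i ∈ Finset.range n, γ ^ i := by
      rw [← Finset.mul_sum]
      congr 1
      exact Finset.sum_range_reflect (fun i => γ ^ i) n
    have hgeo : (1 - γ) * (∑ i ∈ Finset.range n, γ ^ i) ≤ 1 := by
      have := geom_sum_mul γ n
      have hp : (0:ℝ) ≤ γ ^ n := le_of_lt (pow_pos h0 n)
      nlinarith
    have ha0 : (0:ℝ) ≤ (a:ℝ) := by
      have : (3:ℝ) ≤ (a:ℝ) := by exact_mod_cast ha
      linarith
    have hsum0 : (0:ℝ) ≤ ∑ i ∈ Finset.range n, γ ^ i :=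
      Finset.sum_nonneg (fun i _ => le_of_lt (pow_pos h0 i))
    calc (1 - γ) * (∑ i ∈ Finset.range n, (d i : ℝ) * γ ^ (n - 1 - i))
        ≤ (1 - γ) * ((a:ℝ) * ∑ i ∈ Finset.range n, γ ^ i) := by
          apply mul_le_mul_of_nonneg_left _ (by linarith)
          rw [← hre]; exact hle
      _ = (a:ℝ) * ((1 - γ) * ∑ i ∈ Finset.range n, γ ^ i) := by ring
      _ ≤ (a:ℝ) * 1 := mul_le_mul_of_nonneg_left hgeo ha0
      _ = (a:ℝ) := mul_one _

-- MAIN UPPER BOUND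
lemma two_works (a : ℤ) (ha : 3 ≤ a) (β : ℝ) (hβ : 1 < β)
    (hroot : β ^ 3 - (a : ℝ) * β ^ 2 - ((a : ℝ) - 1) * β + 1 = 0)
    (hβa : (a:ℝ) < β) (hβa1 : β < (a:ℝ) + 1)
    (γ : ℝ) (hγ0 : 0 < γ) (hγ1 : γ < 1)
    (hrootγ : γ ^ 3 - (a : ℝ) * γ ^ 2 - ((a : ℝ) - 1) * γ + 1 = 0)
    (hγkey : (a : ℝ) ^ 2 * γ ^ 3 < (1 - γ) ^ 2) :
    ∀ x ∈ betaInt β, ∀ y ∈ betaInt β, x * y ∈ finBeta β → β ^ 2 * (x * y) ∈ betaInt β := by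
  intro x hx y hy hz
  have hβ0 : (0:ℝ) < β := lt_trans one_pos hβ
  have hβn0 : β ≠ 0 := ne_of_gt hβ0
  obtain ⟨Nx, hx1, hx2⟩ := hx
  obtain ⟨Ny, hy1, hy2⟩ := hy
  obtain ⟨N, n', hz1, hz2⟩ := hz
  set u : ℝ := |x * y| / β ^ N with hu
  have hfind : ∃ n : ℕ, (betaT β)^[n] u = 0 := ⟨n', hz2⟩
  set n : ℕ := Nat.find hfind with hn
  have hnspec : (betaT β)^[n] u = 0 := Nat.find_spec hfind
  by_cases hcase : n ≤ N + 2
  · -- β² (x y) is a β-integer, witness N+2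
    refine ⟨N + 2, ?_, ?_⟩
    · have habs : |β ^ 2 * (x * y)| / β ^ (N + 2) = u := by
        rw [abs_mul, abs_pow, abs_of_pos hβ0, hu, pow_add]
        field_simp
      rw [habs]; exact hz1
    · have habs : |β ^ 2 * (x * y)| / β ^ (N + 2) = u := by
        rw [abs_mul, abs_pow, abs_of_pos hβ0, hu, pow_add]
        field_simp
      rw [habs, show N + 2 = (N + 2 - n) + n by omega, Function.iterate_add_apply,
        hnspec, betaT_iterate_zero]
  · exfalso
    push_neg at hcase
    have hNn : N + 3 ≤ n := hcase
    -- digits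
    set dx : ℕ → ℤ := fun i => ⌊β * (betaT β)^[i] (|x| / β ^ Nx)⌋ with hdx
    set dy : ℕ → ℤ := fun i => ⌊β * (betaT β)^[i] (|y| / β ^ Ny)⌋ with hdy
    set e : ℕ → ℤ := fun j => ⌊β * (betaT β)^[j] u⌋ with he
    have hdigit : ∀ (v : ℝ), v ∈ Set.Ico (0:ℝ) 1 → 0 ≤ ⌊β * v⌋ ∧ ⌊β * v⌋ ≤ a := by
      intro v hv
      constructor
      · exact Int.floor_nonneg.mpr (mul_nonneg (le_of_lt hβ0) hv.1)
      · have h2 : β * v < (a:ℝ) + 1 := by nlinarith [hv.1, hv.2]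
        have : ⌊β * v⌋ < a + 1 := by
          rw [Int.floor_lt]; push_cast; exact h2
        omega
    have hdxb : ∀ i < Nx, 0 ≤ dx i ∧ dx i ≤ a :=
      fun i _ => hdigit _ (betaT_iterate_mem_Ico β hx1 i)
    have hdyb : ∀ i < Ny, 0 ≤ dy i ∧ dy i ≤ a :=
      fun i _ => hdigit _ (betaT_iterate_mem_Ico β hy1 i)
    have heb : ∀ j < n, 0 ≤ e j ∧ e j ≤ a :=
      fun j _ => hdigit _ (betaT_iterate_mem_Ico β hz1 j)
    -- last digit of z is ≥ 1
    have hlast : 1 ≤ e (n - 1) := by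
      have hn1 : n - 1 < n := by omega
      have htne : (betaT β)^[n - 1] u ≠ 0 := Nat.find_min hfind hn1
      have htpos : 0 < (betaT β)^[n-1] u := by
        rcases lt_or_eq_of_le (betaT_iterate_mem_Ico β hz1 (n-1)).1 with h | h
        · exact h
        · exact absurd h.symm htne
      have hTt : betaT β ((betaT β)^[n-1] u) = 0 := by
        have h9 : (betaT β)^[(n-1)+1] u = 0 := by
          rw [show (n-1)+1 = n by omega]; exact hnspec
        rwa [Function.iterate_succ_apply'] at h9
      have hbt : β * (betaT β)^[n-1] u = ((⌊β * (betaT β)^[n-1] u⌋ : ℤ) : ℝ) := by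
        have h8 : betaT β ((betaT β)^[n-1] u)
            = β * (betaT β)^[n-1] u - ((⌊β * (betaT β)^[n-1] u⌋ : ℤ) : ℝ) := rfl
        rw [hTt] at h8
        linarith
      have hpos : (0:ℝ) < ((e (n-1) : ℤ) : ℝ) := by
        show (0:ℝ) < ((⌊β * (betaT β)^[n-1] u⌋ : ℤ) : ℝ)
        rw [← hbt]
        exact mul_pos hβ0 htpos
      have : 0 < e (n-1) := by exact_mod_cast hpos
      omega
    -- expansions
    have hex := betaT_expansion β hx2
    have hey := betaT_expansion β hy2
    have hez := betaT_expansion β hnspec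
    -- polynomials
    set px : ℚ[X] := ∑ i ∈ Finset.range Nx, C ((dx i : ℚ)) * X ^ (Nx - 1 - i) with hpx
    set py : ℚ[X] := ∑ i ∈ Finset.range Ny, C ((dy i : ℚ)) * X ^ (Ny - 1 - i) with hpy
    set pz : ℚ[X] := ∑ j ∈ Finset.range n, C ((e j : ℚ)) * X ^ (n - 1 - j) with hpz
    have hevx : (aeval β) px = |x| := by
      rw [hpx, aeval_digit_poly, ← hex]
      rw [mul_div_cancel₀ _ (pow_ne_zero Nx hβn0)]
    have hevy : (aeval β) py = |y| := by
      rw [hpy, aeval_digit_poly, ← hey]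
      rw [mul_div_cancel₀ _ (pow_ne_zero Ny hβn0)]
    have hevz : (aeval β) pz = β ^ n * u := by
      rw [hpz, aeval_digit_poly, ← hez]
    -- the vanishing polynomial
    set q : ℚ[X] := px * py * X ^ (n - N) - pz with hq
    have hqβ : (aeval β) q = 0 := by
      rw [hq, map_sub, map_mul, map_mul, map_pow, aeval_X, hevx, hevy, hevz]
      have h1 : |x| * |y| = β ^ N * u := by
        rw [← abs_mul, hu, mul_div_cancel₀ _ (pow_ne_zero N hβn0)]
      rw [h1]
      rw [show β ^ N * u * β ^ (n - N) = β ^ (N + (n - N)) * u by rw [pow_add]; ring]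
      rw [show N + (n - N) = n by omega]
      ring
    have hqγ := root_transfer a ha β γ hroot hrootγ q hqβ
    rw [hq, map_sub, map_mul, map_mul, map_pow, aeval_X, sub_eq_zero] at hqγ
    rw [hpx, hpy, hpz, aeval_digit_poly, aeval_digit_poly, aeval_digit_poly] at hqγ
    -- bounds
    set Gx : ℝ := ∑ i ∈ Finset.range Nx, (dx i : ℝ) * γ ^ (Nx - 1 - i) with hGx
    set Gy : ℝ := ∑ i ∈ Finset.range Ny, (dy i : ℝ) * γ ^ (Ny - 1 - i) with hGy
    set Gz : ℝ := ∑ j ∈ Finset.range n, (e j : ℝ) * γ ^ (n - 1 - j) with hGz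
    obtain ⟨hGx0, hGxa⟩ := digit_poly_bound a ha γ hγ0 hγ1 dx Nx hdxb
    obtain ⟨hGy0, hGya⟩ := digit_poly_bound a ha γ hγ0 hγ1 dy Ny hdyb
    -- Gz ≥ 1
    have hGz1 : (1:ℝ) ≤ Gz := by
      have hmem : n - 1 ∈ Finset.range n := Finset.mem_range.mpr (by omega)
      have hsingle : (e (n-1) : ℝ) * γ ^ (n - 1 - (n-1)) ≤ Gz := by
        apply Finset.single_le_sum (f := fun j => (e j : ℝ) * γ ^ (n - 1 - j)) _ hmem
        intro i hi
        have := (heb i (Finset.mem_range.mp hi)).1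
        positivity
      rw [show n - 1 - (n-1) = 0 by omega, pow_zero, mul_one] at hsingle
      have : (1:ℝ) ≤ (e (n-1) : ℝ) := by exact_mod_cast hlast
      linarith
    -- γ^(n-N) ≤ γ³
    have hpow : γ ^ (n - N) ≤ γ ^ 3 :=
      pow_le_pow_of_le_one (le_of_lt hγ0) (le_of_lt hγ1) (by omega)
    -- final contradiction
    have h1γ : (0:ℝ) < 1 - γ := by linarith
    have hkey : (1 - γ)^2 * (Gx * Gy * γ ^ (n - N)) ≤ (a:ℝ)^2 * γ^3 := by
      have e1 : (1 - γ)^2 * (Gx * Gy * γ ^ (n - N))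
          = ((1-γ)*Gx) * ((1-γ)*Gy) * γ ^ (n-N) := by ring
      rw [e1]
      have h2 : ((1-γ)*Gx) * ((1-γ)*Gy) ≤ (a:ℝ) * (a:ℝ) := by
        apply mul_le_mul hGxa hGya (by positivity) (by positivity)
      have h3 : (0:ℝ) ≤ ((1-γ)*Gx) * ((1-γ)*Gy) := by positivity
      calc ((1-γ)*Gx) * ((1-γ)*Gy) * γ ^ (n-N) ≤ ((1-γ)*Gx) * ((1-γ)*Gy) * γ ^ 3 := by
            apply mul_le_mul_of_nonneg_left hpow h3
        _ ≤ (a:ℝ) * (a:ℝ) * γ ^ 3 := by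
            apply mul_le_mul_of_nonneg_right h2 (by positivity)
        _ = (a:ℝ)^2 * γ^3 := by ring
    rw [hqγ] at hkey
    have h5 : (1-γ)^2 ≤ (1-γ)^2 * Gz := le_mul_of_one_le_right (by positivity) hGz1
    linarith



lemma betaT_step (β t t' : ℝ) (d : ℤ) (hd : β * t = d + t') (h0 : 0 ≤ t') (h1 : t' < 1) :
    betaT β t = t' := by
  have hf : ⌊β * t⌋ = d := by
    rw [Int.floor_eq_iff]
    constructor
    · rw [hd]; linarith
    · rw [hd]; push_cast; linarith
  show β * t - (⌊β * t⌋ : ℝ) = t'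
  rw [hf, hd]; ring


section bounds
variable (a : ℤ) (w : ℝ)

lemma tail_aux (hw0 : 0 < w) (h3w : 3 * w < 1) :
    2*w - 2*w^2 + 2*w^3 - 2*w^4 + 2*w^5 - w^9 > 0 := by
  have hw1 : w < 1 := by linarith
  have e1 : 0 < 2*w*(1-w) := by nlinarith
  have e2 : 0 < 2*w^3*(1-w) := by nlinarith [pow_pos hw0 3]
  have e3 : w^9 < w^5 := by
    have : w^4 < 1 := by nlinarith [pow_pos hw0 4, pow_lt_one₀ (le_of_lt hw0) hw1 (by norm_num : (4:ℕ) ≠ 0)]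
    nlinarith [pow_pos hw0 5, pow_pos hw0 4]
  nlinarith [pow_pos hw0 5]

lemma t0_lt (ha : (3:ℝ) ≤ (a:ℝ)) (hw0 : 0 < w) (haw : (a:ℝ) * w < 1) (h3w : 3 * w < 1) :
    ((a:ℝ) - 2) * w + w^2 + ((a:ℝ) - 2) * w^3 + w^4 + ((a:ℝ)-2) * w^5 + w^9 < 1 := by
  have h1 : ((a:ℝ) - 2) * w ≤ 1 - 2*w := by linarith
  have h2 : ((a:ℝ) - 2) * w^3 ≤ (1 - 2*w)*w^2 := by nlinarith [sq_nonneg w, mul_pos hw0 hw0]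
  have h3 : ((a:ℝ) - 2) * w^5 ≤ (1 - 2*w)*w^4 := by nlinarith [pow_pos hw0 4]
  have := tail_aux w hw0 h3w
  nlinarith

lemma t1_lt (ha : (3:ℝ) ≤ (a:ℝ)) (hw0 : 0 < w) (haw : (a:ℝ) * w < 1) (h3w : 3 * w < 1) :
    w + ((a:ℝ) - 2) * w^2 + w^3 + ((a:ℝ)-2) * w^4 + w^8 < 1 := by
  have h2 : ((a:ℝ) - 2) * w^2 ≤ (1 - 2*w)*w := by nlinarith [mul_pos hw0 hw0]
  have h3 : ((a:ℝ) - 2) * w^4 ≤ (1 - 2*w)*w^3 := by nlinarith [pow_pos hw0 3]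
  have hw1 : w < 1 := by linarith
  have e3 : w^8 ≤ w^4 := by nlinarith [pow_pos hw0 4, pow_le_one₀ (n := 4) (le_of_lt hw0) (le_of_lt hw1)]
  have e4 : w^4 ≤ w^3 := by nlinarith [pow_pos hw0 3]
  have e5 : w^3 ≤ w^2 := by nlinarith [pow_pos hw0 2]
  nlinarith [mul_pos hw0 hw0]

lemma t2_lt (ha : (3:ℝ) ≤ (a:ℝ)) (hw0 : 0 < w) (haw : (a:ℝ) * w < 1) (h3w : 3 * w < 1) :
    ((a:ℝ)-2)*w + w^2 + ((a:ℝ)-2)*w^3 + w^7 < 1 := by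
  have hw1 : w < 1 := by linarith
  have h2 : ((a:ℝ) - 2) * w^3 ≤ (1 - 2*w)*w^2 := by nlinarith [mul_pos hw0 hw0]
  nlinarith [pow_pos hw0 7, pow_pos hw0 3, mul_pos hw0 hw0,
    pow_le_one₀ (n := 5) (le_of_lt hw0) (le_of_lt hw1), pow_pos hw0 5]

lemma t3_lt (ha : (3:ℝ) ≤ (a:ℝ)) (hw0 : 0 < w) (haw : (a:ℝ) * w < 1) (h3w : 3 * w < 1) :
    w + ((a:ℝ)-2)*w^2 + w^6 < 1 := by
  have hw1 : w < 1 := by linarith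
  have h2 : ((a:ℝ) - 2) * w^2 ≤ (1 - 2*w)*w := by nlinarith [mul_pos hw0 hw0]
  nlinarith [pow_pos hw0 6, mul_pos hw0 hw0,
    pow_le_one₀ (n := 5) (le_of_lt hw0) (le_of_lt hw1), pow_pos hw0 5]

lemma t4_lt (ha : (3:ℝ) ≤ (a:ℝ)) (hw0 : 0 < w) (haw : (a:ℝ) * w < 1) (h3w : 3 * w < 1) :
    ((a:ℝ)-2)*w + w^5 < 1 := by
  have hw1 : w < 1 := by linarith
  nlinarith [pow_pos hw0 5, pow_le_one₀ (n := 4) (le_of_lt hw0) (le_of_lt hw1), pow_pos hw0 4]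

lemma s0_lt (ha : (3:ℝ) ≤ (a:ℝ)) (hw0 : 0 < w) (haw : (a:ℝ) * w < 1) :
    ((a:ℝ) - 1) * (w + w^2 + w^3) < 1 := by
  nlinarith [pow_pos hw0 3, mul_pos hw0 hw0,
    mul_nonneg (le_of_lt (by linarith : (0:ℝ) < 1 - (a:ℝ)*w)) (le_of_lt hw0)]

lemma s1_lt (ha : (3:ℝ) ≤ (a:ℝ)) (hw0 : 0 < w) (haw : (a:ℝ) * w < 1) :
    ((a:ℝ) - 1) * (w + w^2) < 1 := by
  have h := s0_lt a w ha hw0 haw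
  nlinarith [pow_pos hw0 3]

lemma s2_lt (ha : (3:ℝ) ≤ (a:ℝ)) (hw0 : 0 < w) (haw : (a:ℝ) * w < 1) :
    ((a:ℝ) - 1) * w < 1 := by nlinarith

lemma sy_lt (ha : (3:ℝ) ≤ (a:ℝ)) (hw0 : 0 < w) (haw : (a:ℝ) * w < 1) (h3w : 3 * w < 1) :
    ((a:ℝ) - 2) * w + ((a:ℝ) - 1) * (w^2 + w^3 + w^4) < 1 := by
  have h1 : (0:ℝ) ≤ 1 - (a:ℝ)*w := le_of_lt (by linarith)
  nlinarith [mul_nonneg (mul_nonneg h1 (le_of_lt hw0)) (le_of_lt hw0),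
    mul_nonneg h1 (le_of_lt hw0), pow_pos hw0 4, pow_pos hw0 3, mul_pos hw0 hw0,
    mul_lt_of_lt_one_left hw0 h3w]
end bounds

lemma counterexample (a : ℤ) (ha : 3 ≤ a) (β : ℝ)
    (hroot : β ^ 3 - (a : ℝ) * β ^ 2 - ((a : ℝ) - 1) * β + 1 = 0)
    (hβa : (a:ℝ) < β) (hβa1 : β < (a:ℝ) + 1) :
    ∃ x y : ℝ, x ∈ betaInt β ∧ y ∈ betaInt β ∧ x * y ∈ finBeta β ∧
      x * y ∉ betaInt β ∧ β * (x * y) ∉ betaInt β := by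
  have ha' : (3:ℝ) ≤ (a:ℝ) := by exact_mod_cast ha
  have hβ3 : (3:ℝ) < β := lt_of_le_of_lt ha' hβa
  have hβ1 : 1 < β := by linarith
  have hβ0 : (0:ℝ) < β := by linarith
  have hβn0 : β ≠ 0 := ne_of_gt hβ0
  set w : ℝ := β⁻¹ with hw
  have hw0 : 0 < w := by rw [hw]; positivity
  have hbw : β * w = 1 := by rw [hw]; field_simp
  have hwinv : (0:ℝ) < β⁻¹ := by positivity
  have haw : (a:ℝ) * w < 1 := by
    rw [hw, ← mul_inv_cancel₀ hβn0]
    exact mul_lt_mul_of_pos_right hβa hwinv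
  have h3w : 3 * w < 1 := by
    rw [hw, ← mul_inv_cancel₀ hβn0]
    exact mul_lt_mul_of_pos_right hβ3 hwinv
  have ha2 : (0:ℝ) ≤ (a:ℝ) - 2 := by linarith
  have ha1' : (0:ℝ) ≤ (a:ℝ) - 1 := by linarith
  -- the numbers
  set x₀ : ℝ := ((a:ℝ) - 1) * (β^2 + β + 1) with hx₀
  set y₀ : ℝ := ((a:ℝ) - 2) * β^3 + ((a:ℝ) - 1) * (β^2 + β + 1) with hy₀
  have hx₀pos : 0 < x₀ := by
    rw [hx₀]; apply mul_pos (by linarith) (by positivity)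
  have hy₀pos : 0 < y₀ := by
    rw [hy₀]
    have h1 : (0:ℝ) ≤ ((a:ℝ) - 2) * β^3 := mul_nonneg ha2 (by positivity)
    have h2 : (0:ℝ) < ((a:ℝ) - 1) * (β^2 + β + 1) := mul_pos (by linarith) (by positivity)
    linarith
  -- tails for x and y
  set s0 : ℝ := ((a:ℝ) - 1) * (w + w^2 + w^3) with hs0
  set s1 : ℝ := ((a:ℝ) - 1) * (w + w^2) with hs1
  set s2 : ℝ := ((a:ℝ) - 1) * w with hs2
  set sy : ℝ := ((a:ℝ) - 2) * w + ((a:ℝ) - 1) * (w^2 + w^3 + w^4) with hsy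
  have hs0n : 0 ≤ s0 := by rw [hs0]; apply mul_nonneg ha1' (by positivity)
  have hs1n : 0 ≤ s1 := by rw [hs1]; apply mul_nonneg ha1' (by positivity)
  have hs2n : 0 ≤ s2 := by rw [hs2]; apply mul_nonneg ha1' (le_of_lt hw0)
  have hsyn : 0 ≤ sy := by
    rw [hsy]
    have := mul_nonneg ha2 (le_of_lt hw0)
    have := mul_nonneg ha1' (by positivity : (0:ℝ) ≤ w^2 + w^3 + w^4)
    linarith
  have hs0lt : s0 < 1 := hs0 ▸ s0_lt a w ha' hw0 haw
  have hs1lt : s1 < 1 := hs1 ▸ s1_lt a w ha' hw0 haw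
  have hs2lt : s2 < 1 := hs2 ▸ s2_lt a w ha' hw0 haw
  have hsylt : sy < 1 := hsy ▸ sy_lt a w ha' hw0 haw h3w
  -- steps for x
  have sxstep1 : betaT β s0 = s1 := by
    apply betaT_step β s0 s1 (a - 1) _ hs1n hs1lt
    push_cast
    rw [hs0, hs1, hw]
    field_simp
    ring
  have sxstep2 : betaT β s1 = s2 := by
    apply betaT_step β s1 s2 (a - 1) _ hs2n hs2lt
    push_cast
    rw [hs1, hs2, hw]
    field_simp
  have sxstep3 : betaT β s2 = 0 := by
    apply betaT_step β s2 0 (a - 1) _ le_rfl one_pos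
    push_cast
    rw [hs2, hw]
    field_simp
    ring
  have hxiter : (betaT β)^[3] s0 = 0 := by
    rw [show (3:ℕ) = 2 + 1 from rfl, Function.iterate_succ_apply, sxstep1,
      show (2:ℕ) = 1 + 1 from rfl, Function.iterate_succ_apply, sxstep2,
      Function.iterate_one, sxstep3]
  have hux : |x₀| / β ^ 3 = s0 := by
    rw [abs_of_pos hx₀pos, hx₀, hs0, hw]
    field_simp
  have hxmem : x₀ ∈ betaInt β := ⟨3, by rw [hux]; exact ⟨hs0n, hs0lt⟩, by rw [hux]; exact hxiter⟩
  -- steps for y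
  have systep : betaT β sy = s0 := by
    apply betaT_step β sy s0 (a - 2) _ hs0n hs0lt
    push_cast
    rw [hsy, hs0, hw]
    field_simp
  have hyiter : (betaT β)^[4] sy = 0 := by
    rw [show (4:ℕ) = 3 + 1 from rfl, Function.iterate_succ_apply, systep, hxiter]
  have huy : |y₀| / β ^ 4 = sy := by
    rw [abs_of_pos hy₀pos, hy₀, hsy, hw]
    field_simp
  have hymem : y₀ ∈ betaInt β := ⟨4, by rw [huy]; exact ⟨hsyn, hsylt⟩, by rw [huy]; exact hyiter⟩
  -- tails for z
  set t0 : ℝ := ((a:ℝ)-2)*w + w^2 + ((a:ℝ)-2)*w^3 + w^4 + ((a:ℝ)-2)*w^5 + w^9 with ht0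
  set t1 : ℝ := w + ((a:ℝ)-2)*w^2 + w^3 + ((a:ℝ)-2)*w^4 + w^8 with ht1
  set t2 : ℝ := ((a:ℝ)-2)*w + w^2 + ((a:ℝ)-2)*w^3 + w^7 with ht2
  set t3 : ℝ := w + ((a:ℝ)-2)*w^2 + w^6 with ht3
  set t4 : ℝ := ((a:ℝ)-2)*w + w^5 with ht4
  have hterm : ∀ k : ℕ, (0:ℝ) ≤ ((a:ℝ)-2) * w^k := fun k => mul_nonneg ha2 (by positivity)
  have ht0n : 0 ≤ t0 := by
    rw [ht0]
    have h1 := hterm 1; have h3 := hterm 3; have h5 := hterm 5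
    rw [pow_one] at h1
    have : (0:ℝ) ≤ w^2 + w^4 + w^9 := by positivity
    linarith
  have ht1n : 0 ≤ t1 := by
    rw [ht1]
    have h2 := hterm 2; have h4 := hterm 4
    have : (0:ℝ) ≤ w + w^3 + w^8 := by positivity
    linarith
  have ht2n : 0 ≤ t2 := by
    rw [ht2]
    have h1 := hterm 1; have h3 := hterm 3
    rw [pow_one] at h1
    have : (0:ℝ) ≤ w^2 + w^7 := by positivity
    linarith
  have ht3n : 0 ≤ t3 := by
    rw [ht3]
    have h2 := hterm 2
    have : (0:ℝ) ≤ w + w^6 := by positivity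
    linarith
  have ht4n : 0 ≤ t4 := by
    rw [ht4]
    have h1 := hterm 1
    rw [pow_one] at h1
    have : (0:ℝ) ≤ w^5 := by positivity
    linarith
  have hw1 : w < 1 := by linarith
  have ht0lt : t0 < 1 := ht0 ▸ t0_lt a w ha' hw0 haw h3w
  have ht1lt : t1 < 1 := ht1 ▸ t1_lt a w ha' hw0 haw h3w
  have ht2lt : t2 < 1 := ht2 ▸ t2_lt a w ha' hw0 haw h3w
  have ht3lt : t3 < 1 := ht3 ▸ t3_lt a w ha' hw0 haw h3w
  have ht4lt : t4 < 1 := ht4 ▸ t4_lt a w ha' hw0 haw h3w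
  have hwk : ∀ k : ℕ, 0 < w ^ k := fun k => pow_pos hw0 k
  have hwklt : ∀ k : ℕ, 1 ≤ k → w ^ k < 1 := by
    intro k hk
    calc w ^ k ≤ w ^ 1 := pow_le_pow_of_le_one (le_of_lt hw0) (le_of_lt hw1) hk
      _ = w := pow_one w
      _ < 1 := hw1
  -- z steps
  have zstep1 : betaT β t0 = t1 := by
    apply betaT_step β t0 t1 (a - 2) _ ht1n ht1lt
    push_cast; rw [ht0, ht1, hw]; field_simp; ring
  have zstep2 : betaT β t1 = t2 := by
    apply betaT_step β t1 t2 1 _ ht2n ht2lt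
    push_cast; rw [ht1, ht2, hw]; field_simp; ring
  have zstep3 : betaT β t2 = t3 := by
    apply betaT_step β t2 t3 (a - 2) _ ht3n ht3lt
    push_cast; rw [ht2, ht3, hw]; field_simp; ring
  have zstep4 : betaT β t3 = t4 := by
    apply betaT_step β t3 t4 1 _ ht4n ht4lt
    push_cast; rw [ht3, ht4, hw]; field_simp; ring
  have zstep5 : betaT β t4 = w^4 := by
    apply betaT_step β t4 (w^4) (a - 2) _ (le_of_lt (hwk 4)) (hwklt 4 (by norm_num))
    push_cast; rw [ht4, hw]; field_simp
  have zstep6 : betaT β (w^4) = w^3 := by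
    apply betaT_step β (w^4) (w^3) 0 _ (le_of_lt (hwk 3)) (hwklt 3 (by norm_num))
    push_cast; rw [hw]; field_simp; ring
  have zstep7 : betaT β (w^3) = w^2 := by
    apply betaT_step β (w^3) (w^2) 0 _ (le_of_lt (hwk 2)) (hwklt 2 (by norm_num))
    push_cast; rw [hw]; field_simp; ring
  have zstep8 : betaT β (w^2) = w := by
    apply betaT_step β (w^2) w 0 _ (le_of_lt hw0) hw1
    push_cast; rw [hw]; field_simp; ring
  have zstep9 : betaT β w = 0 := by
    apply betaT_step β w 0 1 _ le_rfl one_pos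
    push_cast; rw [hw]; field_simp; ring
  -- iterates of t0
  have hit7 : (betaT β)^[7] t0 = w^2 := by
    rw [show (7:ℕ) = 6 + 1 from rfl, Function.iterate_succ_apply, zstep1,
      show (6:ℕ) = 5 + 1 from rfl, Function.iterate_succ_apply, zstep2,
      show (5:ℕ) = 4 + 1 from rfl, Function.iterate_succ_apply, zstep3,
      show (4:ℕ) = 3 + 1 from rfl, Function.iterate_succ_apply, zstep4,
      show (3:ℕ) = 2 + 1 from rfl, Function.iterate_succ_apply, zstep5,
      show (2:ℕ) = 1 + 1 from rfl, Function.iterate_succ_apply, zstep6,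
      Function.iterate_one, zstep7]
  have hit8 : (betaT β)^[8] t0 = w := by
    rw [show (8:ℕ) = 7 + 1 from rfl, Function.iterate_succ_apply', hit7, zstep8]
  have hit9 : (betaT β)^[9] t0 = 0 := by
    rw [show (9:ℕ) = 8 + 1 from rfl, Function.iterate_succ_apply', hit8, zstep9]
  -- the big identity
  have hzpos : 0 < x₀ * y₀ := mul_pos hx₀pos hy₀pos
  have hbig : x₀ * y₀ * β^2 = ((a:ℝ)-2)*β^8 + β^7 + ((a:ℝ)-2)*β^6 + β^5 + ((a:ℝ)-2)*β^4 + 1 := by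
    rw [hx₀, hy₀]
    linear_combination ((2-(a:ℝ))*β^5 + (1-(a:ℝ))*β^4 + (3-2*(a:ℝ))*β^3 - (a:ℝ)*β^2 + (1-(a:ℝ))*β - 1) * hroot
  have huz : |x₀ * y₀| / β ^ 7 = t0 := by
    rw [abs_of_pos hzpos]
    have e : x₀ * y₀ / β ^ 7 = (x₀ * y₀ * β^2) / β^9 := by
      field_simp
    rw [e, hbig, ht0, hw]
    field_simp
  have huz8 : |β * (x₀ * y₀)| / β ^ 8 = t0 := by
    rw [abs_of_pos (by positivity : 0 < β * (x₀ * y₀))]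
    rw [show β * (x₀ * y₀) / β ^ 8 = x₀ * y₀ / β ^ 7 by field_simp]
    rw [← abs_of_pos hzpos, huz]
  refine ⟨x₀, y₀, hxmem, hymem, ⟨7, 9, ?_, ?_⟩, ?_, ?_⟩
  · rw [huz]; exact ⟨ht0n, ht0lt⟩
  · rw [huz]; exact hit9
  · apply not_mem_betaInt β hβ1 _ 7 (by rw [huz]; exact ⟨ht0n, ht0lt⟩)
    rw [huz, hit7]
    positivity
  · apply not_mem_betaInt β hβ1 _ 8 (by rw [huz8]; exact ⟨ht0n, ht0lt⟩)
    rw [huz8, hit8]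
    positivity



theorem stmt15 (a : ℤ) (ha : 3 ≤ a) (β : ℝ) (hβ : 1 < β)
    (hroot : β ^ 3 - (a : ℝ) * β ^ 2 - ((a : ℝ) - 1) * β + 1 = 0) :
    Lmul β = 2 := by
  obtain ⟨hβa, hβa1⟩ := beta_bounds a ha β hβ hroot
  obtain ⟨γ, hγ0, hγ1, hγroot⟩ := gamma_exists a ha
  have hγkey := gamma_ineq a ha γ hγ0 hγ1 hγroot
  have h2 : (2:ℕ) ∈ {L : ℕ | ∀ x ∈ betaInt β, ∀ y ∈ betaInt β,
      x * y ∈ finBeta β → β ^ L * (x * y) ∈ betaInt β} :=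
    two_works a ha β hβ hroot hβa hβa1 γ hγ0 hγ1 hγroot hγkey
  obtain ⟨x, y, hx, hy, hfin, hn0, hn1⟩ := counterexample a ha β hroot hβa hβa1
  have h0 : (0:ℕ) ∉ {L : ℕ | ∀ x ∈ betaInt β, ∀ y ∈ betaInt β,
      x * y ∈ finBeta β → β ^ L * (x * y) ∈ betaInt β} := by
    intro h
    exact hn0 (by simpa using h x hx y hy hfin)
  have h1 : (1:ℕ) ∉ {L : ℕ | ∀ x ∈ betaInt β, ∀ y ∈ betaInt β,
      x * y ∈ finBeta β → β ^ L * (x * y) ∈ betaInt β} := by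
    intro h
    exact hn1 (by simpa [pow_one] using h x hx y hy hfin)
  unfold Lmul
  apply le_antisymm (Nat.sInf_le h2)
  apply le_csInf ⟨2, h2⟩
  intro m hm
  by_contra hlt
  push_neg at hlt
  interval_cases m
  · exact h0 hm
  · exact h1 hm
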